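/- For the map f: P²(ℂ) ⇢ P²(ℂ), f = [x²y+y²z : xyz : x²y+xy²+2y²z+xz²+yz²], every point of the form [a:1:b] with a, b ∈ ℂ has a preimage with all coordinates nonzero; explicitly, there exists x ∈ ℂ \ {0} with y = ax − x² ≠ 0 and f(x, y, 1) proportional to (a, 1, b). -/
import Mathlib


noncomputable def f0 (x y z : ℂ) : ℂ := x^2*y + y^2*z
noncomputable def f1 (x y z : ℂ) : ℂ := x*y*z
noncomputable def f2 (x y z : ℂ) : ℂ := x^2*y + x*y^2 + 2*y^2*z + x*z^2 + y*z^2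

open Polynomial in
lemma exists_quartic_root (a b : ℂ) :
    ∃ x : ℂ, x ≠ 0 ∧ x ≠ a ∧
      x^4 + (1-2*a)*x^3 + (a^2-3*a+b)*x^2 + (2*a^2-a*b-1)*x + (a+1) = 0 := by
  by_cases ha : a = -1
  · subst ha
    by_cases hb : b = -1
    · subst hb
      refine ⟨(-3 + Complex.I * Real.sqrt 3)/2, ?_, ?_, ?_⟩
      · intro h
        have him : ((((-3 : ℂ) + Complex.I * Real.sqrt 3)/2)).im = 0 := by
          rw [h]; simp
        simp [Complex.div_im, Complex.add_im, Complex.mul_im] at him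
      · intro h
        have hre : ((((-3 : ℂ) + Complex.I * Real.sqrt 3)/2)).re = -1 := by
          rw [h]; simp
        simp [Complex.div_re, Complex.add_re, Complex.mul_re] at hre
        linarith
      · have h3 : (Real.sqrt 3 : ℂ)^2 = 3 := by
          rw [← Complex.ofReal_pow, Real.sq_sqrt (by norm_num : (3:ℝ) ≥ 0)]
          norm_num
        have hI : Complex.I^2 = -1 := Complex.I_sq
        have hq2 : ((-3 + Complex.I * Real.sqrt 3)/2)^2
            + 3*((-3 + Complex.I * Real.sqrt 3)/2) + 3 = 0 := by
          linear_combination ((Real.sqrt 3:ℂ)^2/4) * hI - (1/4:ℂ) * h3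
        linear_combination (((-3 + Complex.I * Real.sqrt 3)/2)^2) * hq2
    · -- cubic x^3+3x^2+(4+b)x+(1+b) has a root
      have hdeg : (0 : WithBot ℕ) <
          (X^3 + 3*X^2 + C (4+b)*X + C (1+b) : ℂ[X]).degree := by
        have : (X^3 + 3*X^2 + C (4+b)*X + C (1+b) : ℂ[X]).degree = 3 := by
          compute_degree!
        rw [this]; norm_num
      obtain ⟨x, hx⟩ := Complex.exists_root hdeg
      have hx' : x^3 + 3*x^2 + (4+b)*x + (1+b) = 0 := by
        have := hx
        simp [Polynomial.IsRoot, Polynomial.eval_add, Polynomial.eval_mul,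
          Polynomial.eval_pow] at this
        linear_combination this
      refine ⟨x, ?_, ?_, ?_⟩
      · rintro rfl
        apply hb
        linear_combination hx'
      · rintro rfl
        have : (0:ℂ) = -1 := by linear_combination -hx'
        norm_num at this
      · linear_combination x * hx'
  · have hdeg : (0 : WithBot ℕ) <
        (X^4 + C (1-2*a)*X^3 + C (a^2-3*a+b)*X^2 + C (2*a^2-a*b-1)*X + C (a+1)
          : ℂ[X]).degree := by
      have : (X^4 + C (1-2*a)*X^3 + C (a^2-3*a+b)*X^2 + C (2*a^2-a*b-1)*X + C (a+1)
          : ℂ[X]).degree = 4 := by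
        compute_degree!
      rw [this]; norm_num
    obtain ⟨x, hx⟩ := Complex.exists_root hdeg
    have hx' : x^4 + (1-2*a)*x^3 + (a^2-3*a+b)*x^2 + (2*a^2-a*b-1)*x + (a+1) = 0 := by
      have := hx
      simp [Polynomial.IsRoot, Polynomial.eval_add, Polynomial.eval_mul,
        Polynomial.eval_pow] at this
      linear_combination this
    refine ⟨x, ?_, ?_, hx'⟩
    · rintro rfl
      apply ha
      linear_combination hx'
    · rintro rfl
      have : (1:ℂ) = 0 := by linear_combination hx'
      norm_num at this
    
/-- For the map `f = [x²y+y²z : xyz : x²y+xy²+2y²z+xz²+yz²]` on `ℙ²(ℂ)`, every point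
`[a:1:b]` (a point off the line `y = 0`) has a preimage with all coordinates nonzero:
there exists `x ≠ 0` with `y = ax − x² ≠ 0` such that `f(x, y, 1)` is a nonzero scalar
multiple of `(a, 1, b)`. -/
theorem preimage_off_the_line (a b : ℂ) :
    ∃ x y : ℂ, x ≠ 0 ∧ y = a*x - x^2 ∧ y ≠ 0 ∧
      ∃ t : ℂ, t ≠ 0 ∧
        f0 x y 1 = t * a ∧ f1 x y 1 = t * 1 ∧ f2 x y 1 = t * b := by
  obtain ⟨x, hx0, hxa, hq⟩ := exists_quartic_root a b
  have hy : a*x - x^2 ≠ 0 := by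
    have : a*x - x^2 = x * (a - x) := by ring
    rw [this]
    exact mul_ne_zero hx0 (sub_ne_zero.mpr (Ne.symm hxa))
  refine ⟨x, a*x - x^2, hx0, rfl, hy, x * (a*x - x^2), mul_ne_zero hx0 hy, ?_, ?_, ?_⟩
  · simp only [f0]; ring
  · simp only [f1]
  · simp only [f2]
    linear_combination x * hq
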